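/- Let f : Ω → ℂ be a nonvanishing scalar C¹ function on an open set Ω ⊆ ℝ³, and let W = W₀ + W₁e₁ + W₂e₂ + W₃e₃ : Ω → ℍ(ℂ) be any C¹ function. Set φ₀ = W₀/f and φ_k = fW_k for k = 1, 2, 3, and let F₀ = f, F_k = e_k/f. Then V̄W = Σ_{α=0}^{3} F_α·(Dφ_α), where the products are quaternionic products taken in the written order. -/

import Mathlib

open Quaternion

noncomputable section

/-- Points of ℝ³. -/
abbrev P3 := EuclideanSpace ℝ (Fin 3)

/-- Partial derivative ∂ₖ of a complex-valued function on ℝ³. -/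
def pd (k : Fin 3) (F : P3 → ℂ) : P3 → ℂ :=
  fun p => fderiv ℝ F p (EuclideanSpace.single k 1)

/-- The Laplacian Δ = ∂₁² + ∂₂² + ∂₃². -/
def lap3 (F : P3 → ℂ) : P3 → ℂ := fun p => ∑ k : Fin 3, pd k (pd k F) p

/-- Embedding of a complex scalar as a quaternion. -/
def qC (z : ℂ) : ℍ[ℂ] := ⟨z, 0, 0, 0⟩

/-- The quaternionic imaginary units e₁, e₂, e₃. -/
def qe : Fin 3 → ℍ[ℂ] := ![⟨0,1,0,0⟩, ⟨0,0,1,0⟩, ⟨0,0,0,1⟩]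

/-- The eₖ-components of a quaternion. -/
def qcomp : Fin 3 → ℍ[ℂ] → ℂ := ![QuaternionAlgebra.imI, QuaternionAlgebra.imJ, QuaternionAlgebra.imK]

/-- Quaternionic conjugation C_H. -/
def CH (q : ℍ[ℂ]) : ℍ[ℂ] := ⟨q.re, -q.imI, -q.imJ, -q.imK⟩

/-- Componentwise partial derivative of a quaternion-valued function. -/
def pdq (k : Fin 3) (W : P3 → ℍ[ℂ]) : P3 → ℍ[ℂ] :=
  fun p => ⟨pd k (fun x => (W x).re) p, pd k (fun x => (W x).imI) p,
            pd k (fun x => (W x).imJ) p, pd k (fun x => (W x).imK) p⟩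

/-- The Dirac (Moisil–Theodorescu) operator D Q = Σₖ eₖ ∂ₖ Q. -/
def Dq (W : P3 → ℍ[ℂ]) : P3 → ℍ[ℂ] := fun p => ∑ k : Fin 3, qe k * pdq k W p

/-- The right Dirac operator Dᵣ Q = Σₖ (∂ₖ Q) eₖ. -/
def Drq (W : P3 → ℍ[ℂ]) : P3 → ℍ[ℂ] := fun p => ∑ k : Fin 3, pdq k W p * qe k

/-- Gradient of a scalar function viewed as a purely vectorial quaternion. -/
def gradq (F : P3 → ℂ) : P3 → ℍ[ℂ] := fun p => ⟨0, pd 0 F p, pd 1 F p, pd 2 F p⟩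

/-- Divergence of (the vector part of) a quaternion-valued function. -/
def divq (W : P3 → ℍ[ℂ]) : P3 → ℂ :=
  fun p => pd 0 (fun x => (W x).imI) p + pd 1 (fun x => (W x).imJ) p + pd 2 (fun x => (W x).imK) p

/-- Rotor (curl) of (the vector part of) a quaternion-valued function. -/
def rotq (W : P3 → ℍ[ℂ]) : P3 → ℍ[ℂ] :=
  fun p => ⟨0,
    pd 1 (fun x => (W x).imK) p - pd 2 (fun x => (W x).imJ) p,
    pd 2 (fun x => (W x).imI) p - pd 0 (fun x => (W x).imK) p,
    pd 0 (fun x => (W x).imJ) p - pd 1 (fun x => (W x).imI) p⟩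

/-- Cross product of the vector parts of two quaternions. -/
def crossq (u v : ℍ[ℂ]) : ℍ[ℂ] :=
  ⟨0, u.imJ * v.imK - u.imK * v.imJ, u.imK * v.imI - u.imI * v.imK, u.imI * v.imJ - u.imJ * v.imI⟩

/-- Bilinear scalar product of the vector parts of two quaternions. -/
def dotq (u v : ℍ[ℂ]) : ℂ := u.imI * v.imI + u.imJ * v.imJ + u.imK * v.imK

/-- `Cⁿ` smoothness of a quaternion-valued function on a set, componentwise. -/
def QContDiffOn (n : ℕ) (W : P3 → ℍ[ℂ]) (Ω : Set P3) : Prop :=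
  ContDiffOn ℝ n (fun p => (W p).re) Ω ∧ ContDiffOn ℝ n (fun p => (W p).imI) Ω ∧
  ContDiffOn ℝ n (fun p => (W p).imJ) Ω ∧ ContDiffOn ℝ n (fun p => (W p).imK) Ω

/-- The pure-quaternion Df/f built from a nonvanishing scalar function f. -/
def DfF (f : P3 → ℂ) : P3 → ℍ[ℂ] := fun p => (f p)⁻¹ • gradq f p

lemma pd_mul {f g : P3 → ℂ} {p : P3} (k : Fin 3)
    (hf : DifferentiableAt ℝ f p) (hg : DifferentiableAt ℝ g p) :
    pd k (fun x => f x * g x) p = pd k f p * g p + f p * pd k g p := by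
  unfold pd
  rw [fderiv_fun_mul hf hg]
  simp; ring

lemma pd_inv {f : P3 → ℂ} {p : P3} (k : Fin 3)
    (hf : DifferentiableAt ℝ f p) (h0 : f p ≠ 0) :
    pd k (fun x => (f x)⁻¹) p = -(pd k f p) / (f p)^2 := by
  have h := ((hasFDerivAt_inv (𝕜 := ℂ) h0).restrictScalars ℝ).comp p hf.hasFDerivAt
  unfold pd
  rw [show (fun x => (f x)⁻¹) = (fun x : ℂ => x⁻¹) ∘ f from rfl, h.fderiv]
  simp [pd, div_eq_mul_inv]

set_option maxHeartbeats 2000000 in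
/-- representation of the derivative,
    V̄W = Σ_α Fα·(Dφα) with φ₀ = W₀/f, φₖ = fWₖ, F₀ = f, Fₖ = eₖ/f. -/
theorem statement9 (Ω : Set P3) (hΩ : IsOpen Ω)
    (f : P3 → ℂ) (hf : ContDiffOn ℝ 1 f Ω) (hf0 : ∀ p ∈ Ω, f p ≠ 0)
    (W : P3 → ℍ[ℂ]) (hW : QContDiffOn 1 W Ω) :
    ∀ p ∈ Ω,
      Drq W p - CH (W p) * DfF f p
        = qC (f p) * gradq (fun x => (W x).re / f x) p
            + ∑ k : Fin 3, ((f p)⁻¹ • qe k) * gradq (fun x => f x * qcomp k (W x)) p := by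
  intro p hp
  have hmem := hΩ.mem_nhds hp
  have hfd : DifferentiableAt ℝ f p := (hf.contDiffAt hmem).differentiableAt one_ne_zero
  obtain ⟨hW0, hW1, hW2, hW3⟩ := hW
  have hd0 : DifferentiableAt ℝ (fun x => (W x).re) p :=
    (hW0.contDiffAt hmem).differentiableAt one_ne_zero
  have hd1 : DifferentiableAt ℝ (fun x => (W x).imI) p :=
    (hW1.contDiffAt hmem).differentiableAt one_ne_zero
  have hd2 : DifferentiableAt ℝ (fun x => (W x).imJ) p :=
    (hW2.contDiffAt hmem).differentiableAt one_ne_zero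
  have hd3 : DifferentiableAt ℝ (fun x => (W x).imK) p :=
    (hW3.contDiffAt hmem).differentiableAt one_ne_zero
  have h0 : f p ≠ 0 := hf0 p hp
  have hre : ∀ k, pd k (fun x => (W x).re / f x) p
      = pd k (fun x => (W x).re) p * (f p)⁻¹ + (W p).re * (-(pd k f p) / (f p)^2) := by
    intro k
    have he : (fun x => (W x).re / f x) = fun x => (W x).re * (f x)⁻¹ := by
      funext x; rw [div_eq_mul_inv]
    rw [he, pd_mul k hd0 (by exact hfd.inv h0 : DifferentiableAt ℝ (fun x => (f x)⁻¹) p), pd_inv k hfd h0]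
  have hm1 : ∀ k, pd k (fun x => f x * (W x).imI) p
      = pd k f p * (W p).imI + f p * pd k (fun x => (W x).imI) p := fun k => pd_mul k hfd hd1
  have hm2 : ∀ k, pd k (fun x => f x * (W x).imJ) p
      = pd k f p * (W p).imJ + f p * pd k (fun x => (W x).imJ) p := fun k => pd_mul k hfd hd2
  have hm3 : ∀ k, pd k (fun x => f x * (W x).imK) p
      = pd k f p * (W p).imK + f p * pd k (fun x => (W x).imK) p := fun k => pd_mul k hfd hd3
  simp only [Drq, DfF, Fin.sum_univ_three]
  ext <;>
  · simp only [Quaternion.re_mul, Quaternion.imI_mul, Quaternion.imJ_mul, Quaternion.imK_mul, Quaternion.re_add, Quaternion.imI_add, Quaternion.imJ_add, Quaternion.imK_add, Quaternion.re_sub, Quaternion.imI_sub, Quaternion.imJ_sub, Quaternion.imK_sub, Quaternion.re_smul, Quaternion.imI_smul, Quaternion.imJ_smul, Quaternion.imK_smul]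
    simp only [CH, pdq, gradq, qC, qe, qcomp, Matrix.cons_val, smul_eq_mul, hre, hm1, hm2, hm3]
    field_simp
    ring
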